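/- Let a, h, r be real numbers with 0 < r < h. Then the hyperbolic area of the closed disk {(x,y) ∈ ℝ² : (x−a)² + (y−h)² ≤ r²}, namely the integral of 1/y² over this disk with respect to Lebesgue measure dx dy, equals 2π·(h/√(h² − r²) − 1). -/

import Mathlib

open MeasureTheory Real


noncomputable def Faux (r c u : ℝ) : ℝ :=
  2 * ((Real.sqrt (c^2 + r^2) / c) *
      Real.arcsin (Real.sqrt (c^2 + r^2) * u / (r * Real.sqrt (c^2 + u^2)))
    - Real.arcsin (u / r))

lemma Faux_deriv (r c : ℝ) (hr : 0 < r) (hc : 0 < c) {u : ℝ} (hu : u ∈ Set.Ioo (-r) r) :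
    HasDerivAt (Faux r c) (2 * Real.sqrt (r^2 - u^2) / (c^2 + u^2)) u := by
  obtain ⟨hu1, hu2⟩ := hu
  have hq : (0:ℝ) < c^2 + u^2 := by positivity
  have hH : (0:ℝ) < c^2 + r^2 := by positivity
  have hru : (0:ℝ) < r^2 - u^2 := by nlinarith
  set q := Real.sqrt (c^2 + u^2) with hqdef
  set H := Real.sqrt (c^2 + r^2) with hHdef
  set s := Real.sqrt (r^2 - u^2) with hsdef
  have hq0 : 0 < q := Real.sqrt_pos.2 hq
  have hH0 : 0 < H := Real.sqrt_pos.2 hH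
  have hs0 : 0 < s := Real.sqrt_pos.2 hru
  have hq2 : q^2 = c^2 + u^2 := Real.sq_sqrt hq.le
  have hH2 : H^2 = c^2 + r^2 := Real.sq_sqrt hH.le
  have hs2 : s^2 = r^2 - u^2 := Real.sq_sqrt hru.le
  -- derivative of q
  have hqd : HasDerivAt (fun u => Real.sqrt (c^2 + u^2)) (u / q) u := by
    have h1 : HasDerivAt (fun u : ℝ => c^2 + u^2) (2*u) u := by
      simpa using (hasDerivAt_pow 2 u).const_add (c^2)
    have := h1.sqrt (ne_of_gt hq)
    simpa [hqdef] using this.congr_deriv (by ring)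
  -- derivative of g = H*u/(r*q)
  have hgd : HasDerivAt (fun u => H * u / (r * Real.sqrt (c^2 + u^2)))
      (H * c^2 / (r * q^3)) u := by
    have h1 : HasDerivAt (fun u : ℝ => H * u) H u := by
      simpa using (hasDerivAt_id u).const_mul H
    have h2 : HasDerivAt (fun u => r * Real.sqrt (c^2 + u^2)) (r * (u/q)) u :=
      hqd.const_mul r
    have := h1.div h2 (by positivity)
    refine HasDerivAt.congr_deriv (f := fun u => H * u / (r * Real.sqrt (c^2 + u^2))) this ?_
    symm
    rw [← hqdef]
    field_simp
    ring_nf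
    linear_combination (-1 : ℝ) * hq2
  -- bounds for arcsin arguments
  have hglt : (H * u / (r * q))^2 < 1 := by
    rw [div_pow, div_lt_one (by positivity)]
    rw [mul_pow, mul_pow, hH2, hq2]
    nlinarith [sq_nonneg u, sq_nonneg c, mul_pos hc hc]
  have hg1 : H * u / (r * q) ≠ 1 := by
    intro h; rw [h] at hglt; simp at hglt
  have hgm1 : H * u / (r * q) ≠ -1 := by
    intro h; rw [h] at hglt; norm_num at hglt
  have hur1 : u / r ≠ 1 := by
    intro h; have : u = r := by field_simp at h; linarith [h]
    linarith
  have hurm1 : u / r ≠ -1 := by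
    intro h
    have : u = -r := by
      have := h; field_simp at this; linarith
    linarith
  -- sqrt simplifications
  have hsq1 : Real.sqrt (1 - (H * u / (r * q))^2) = c * s / (r * q) := by
    have : 1 - (H * u / (r * q))^2 = (c * s / (r * q))^2 := by
      field_simp
      linear_combination r^2 * hq2 - u^2 * hH2 - c^2 * hs2
    rw [this, Real.sqrt_sq (by positivity)]
  have hsq2 : Real.sqrt (1 - (u / r)^2) = s / r := by
    have : 1 - (u / r)^2 = (s / r)^2 := by
      field_simp
      linear_combination - hs2
    rw [this, Real.sqrt_sq (by positivity)]
  -- arcsin ∘ g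
  have hA : HasDerivAt (fun u => Real.arcsin (H * u / (r * Real.sqrt (c^2 + u^2))))
      ((1 / (c * s / (r * q))) * (H * c^2 / (r * q^3))) u := by
    have harc := Real.hasDerivAt_arcsin hgm1 hg1
    have := harc.comp u hgd
    rw [hsq1] at this
    exact this
  have hB : HasDerivAt (fun u => Real.arcsin (u / r)) ((1 / (s / r)) * (1 / r)) u := by
    have harc := Real.hasDerivAt_arcsin hurm1 hur1
    have hdiv : HasDerivAt (fun u : ℝ => u / r) (1 / r) u := by
      simpa using (hasDerivAt_id u).div_const r
    have := harc.comp u hdiv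
    rw [hsq2] at this
    exact this
  have hF : HasDerivAt (Faux r c)
      (2 * ((H / c) * ((1 / (c * s / (r * q))) * (H * c^2 / (r * q^3)))
        - (1 / (s / r)) * (1 / r))) u := by
    unfold Faux
    rw [← hHdef]
    exact (((hA.const_mul (H / c)).sub hB).const_mul 2).congr_deriv (by ring)
  convert hF using 1
  have hq3 : q^3 = q * (c^2 + u^2) := by
    rw [pow_succ, hq2]; ring
  rw [hq3]
  field_simp
  linear_combination hs2 - hH2

lemma intJ (r c : ℝ) (hr : 0 < r) (hc : 0 < c) :
    ∫ u in (-r)..r, 2 * Real.sqrt (r^2 - u^2) / (c^2 + u^2)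
      = 2 * Real.pi * (Real.sqrt (c^2 + r^2) / c - 1) := by
  have hH : (0:ℝ) < c^2 + r^2 := by positivity
  set H := Real.sqrt (c^2 + r^2) with hHdef
  have hH0 : 0 < H := Real.sqrt_pos.2 hH
  have hcontq : Continuous fun u : ℝ => r * Real.sqrt (c^2 + u^2) := by
    continuity
  have hqq : ∀ u : ℝ, r * Real.sqrt (c^2 + u^2) ≠ 0 := by
    intro u
    have : (0:ℝ) < c^2 + u^2 := by positivity
    positivity
  have hcontF : Continuous (Faux r c) := by
    unfold Faux
    apply Continuous.mul continuous_const
    apply Continuous.sub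
    · exact continuous_const.mul (Real.continuous_arcsin.comp
        (((continuous_const.mul continuous_id).div hcontq hqq)))
    · exact Real.continuous_arcsin.comp (continuous_id.div_const r)
  have hint : IntervalIntegrable (fun u => 2 * Real.sqrt (r^2 - u^2) / (c^2 + u^2))
      volume (-r) r := by
    apply Continuous.intervalIntegrable
    apply Continuous.div
    · continuity
    · continuity
    · intro u; positivity
  have heq := intervalIntegral.integral_eq_sub_of_hasDeriv_right_of_le
    (by linarith : -r ≤ r) hcontF.continuousOn
    (fun u hu => (Faux_deriv r c hr hc hu).hasDerivWithinAt) hint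
  rw [heq]
  have h1 : Faux r c r = 2 * ((H / c) * (Real.pi / 2) - Real.pi / 2) := by
    unfold Faux
    rw [← hHdef]
    have e1 : H * r / (r * H) = 1 := by field_simp
    have e2 : r / r = 1 := div_self hr.ne'
    rw [e1, e2, Real.arcsin_one]
  have h2 : Faux r c (-r) = 2 * (-((H / c) * (Real.pi / 2)) + Real.pi / 2) := by
    unfold Faux
    have hn : ((-r:ℝ))^2 = r^2 := by ring
    rw [hn, ← hHdef]
    have e1 : H * (-r) / (r * H) = -1 := by field_simp
    have e2 : (-r) / r = -1 := by field_simp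
    rw [e1, e2, Real.arcsin_neg_one]
    ring
  rw [h1, h2]
  ring

/-- The hyperbolic area of a Euclidean disk of center `(a,h)` and radius `r`
contained in the upper half plane (`0 < r < h`) is `2π(h/√(h² − r²) − 1)`. -/
theorem hyperbolic_area_of_disk (a h r : ℝ) (hr : 0 < r) (hrh : r < h) :
    ∫ p in {p : ℝ × ℝ | (p.1 - a) ^ 2 + (p.2 - h) ^ 2 ≤ r ^ 2}, 1 / p.2 ^ 2
      = 2 * Real.pi * (h / Real.sqrt (h ^ 2 - r ^ 2) - 1) := by
  have h0 : 0 < h := lt_trans hr hrh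
  have hc2 : (0:ℝ) < h^2 - r^2 := by nlinarith
  set c := Real.sqrt (h^2 - r^2) with hcdef
  have hc0 : 0 < c := Real.sqrt_pos.2 hc2
  have hcsq : c^2 = h^2 - r^2 := Real.sq_sqrt hc2.le
  set S := {p : ℝ × ℝ | (p.1 - a) ^ 2 + (p.2 - h) ^ 2 ≤ r ^ 2} with hSdef
  have hScl : IsClosed S := by
    have : S = (fun p : ℝ × ℝ => (p.1 - a) ^ 2 + (p.2 - h) ^ 2) ⁻¹' Set.Iic (r^2) := rfl
    rw [this]
    exact isClosed_Iic.preimage (by continuity)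
  have hSm : MeasurableSet S := hScl.measurableSet
  have hSsub : S ⊆ Metric.closedBall (a, h) r := by
    intro p hp
    simp only [hSdef, Set.mem_setOf_eq] at hp
    rw [Metric.mem_closedBall, Prod.dist_eq]
    simp only [Real.dist_eq]
    apply max_le <;> rw [abs_le] <;> constructor <;> nlinarith [sq_nonneg (p.1 - a), sq_nonneg (p.2 - h)]
  have hScomp : IsCompact S :=
    (Metric.isCompact_of_isClosed_isBounded hScl
      (Metric.isBounded_closedBall.subset hSsub))
  have hSpos : ∀ p ∈ S, 0 < p.2 := by
    intro p hp
    simp only [hSdef, Set.mem_setOf_eq] at hp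
    nlinarith [sq_nonneg (p.1 - a)]
  have hIntOn : IntegrableOn (fun p : ℝ × ℝ => 1 / p.2 ^ 2) S := by
    apply ContinuousOn.integrableOn_compact hScomp
    apply ContinuousOn.div continuousOn_const
    · exact (continuous_snd.pow 2).continuousOn
    · exact fun p hp => pow_ne_zero 2 (hSpos p hp).ne'
  have hInd : Integrable (S.indicator fun p : ℝ × ℝ => 1 / p.2 ^ 2) volume :=
    (integrable_indicator_iff hSm).2 hIntOn
  rw [← MeasureTheory.integral_indicator hSm]
  rw [MeasureTheory.Measure.volume_eq_prod] at hInd ⊢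
  rw [MeasureTheory.integral_prod _ hInd]
  -- inner integral
  have hrr : h - r > 0 := by linarith
  have inner : ∀ x : ℝ,
      (∫ y : ℝ, S.indicator (fun p : ℝ × ℝ => 1 / p.2 ^ 2) (x, y))
        = 2 * Real.sqrt (r^2 - (x-a)^2) / (c^2 + (x-a)^2) := by
    intro x
    by_cases hd : (x - a)^2 ≤ r^2
    · set s := Real.sqrt (r^2 - (x-a)^2) with hsdef
      have hs2 : s^2 = r^2 - (x-a)^2 := Real.sq_sqrt (by linarith)
      have hs0 : 0 ≤ s := Real.sqrt_nonneg _
      have hsr : s ≤ r := by nlinarith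
      have hmem : ∀ y : ℝ, (x, y) ∈ S ↔ y ∈ Set.Icc (h - s) (h + s) := by
        intro y
        simp only [hSdef, Set.mem_setOf_eq, Set.mem_Icc]
        constructor
        · intro hy
          constructor <;> nlinarith [sq_nonneg (y - h + s), sq_nonneg (y - h - s)]
        · intro ⟨h1, h2⟩; nlinarith
      have hfun : (fun y : ℝ => S.indicator (fun p : ℝ × ℝ => 1 / p.2 ^ 2) (x, y))
          = (Set.Icc (h - s) (h + s)).indicator (fun y : ℝ => 1 / y ^ 2) := by
        funext y
        by_cases hy : y ∈ Set.Icc (h - s) (h + s)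
        · rw [Set.indicator_of_mem hy, Set.indicator_of_mem ((hmem y).2 hy)]
        · rw [Set.indicator_of_notMem hy,
            Set.indicator_of_notMem (fun hmem' => hy ((hmem y).1 hmem'))]
      rw [hfun, MeasureTheory.integral_indicator measurableSet_Icc,
        MeasureTheory.integral_Icc_eq_integral_Ioc,
        ← intervalIntegral.integral_of_le (by linarith : h - s ≤ h + s)]
      have hpos : ∀ y ∈ Set.uIcc (h - s) (h + s), (0:ℝ) < y := by
        intro y hy
        rw [Set.uIcc_of_le (by linarith : h - s ≤ h + s)] at hy
        have := hy.1; linarith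
      have hftc := intervalIntegral.integral_eq_sub_of_hasDerivAt
        (f := fun y : ℝ => -(y⁻¹)) (f' := fun y : ℝ => 1 / y ^ 2)
        (a := h - s) (b := h + s) ?_ ?_
      · rw [hftc]
        have hne1 : h - s ≠ 0 := by linarith
        have hne2 : h + s ≠ 0 := by positivity
        field_simp
        linear_combination (2 : ℝ) * s * hcsq + 2 * s * hs2
      · intro y hy
        have hy0 : y ≠ 0 := (hpos y hy).ne'
        have := (hasDerivAt_inv hy0).neg
        simpa [one_div, Pi.neg_def] using this
      · apply ContinuousOn.intervalIntegrable
        apply ContinuousOn.div continuousOn_const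
        · exact (continuous_pow 2).continuousOn
        · exact fun y hy => pow_ne_zero 2 (hpos y hy).ne'
    · push_neg at hd
      have hempty : ∀ y : ℝ, (x, y) ∉ S := by
        intro y hy
        simp only [hSdef, Set.mem_setOf_eq] at hy
        nlinarith [sq_nonneg (y - h)]
      have hz : Real.sqrt (r^2 - (x-a)^2) = 0 :=
        Real.sqrt_eq_zero_of_nonpos (by linarith)
      simp [Set.indicator_of_notMem, hempty, hz]
  simp_rw [inner]
  -- outer integral
  have houter : (fun x : ℝ => 2 * Real.sqrt (r^2 - (x-a)^2) / (c^2 + (x-a)^2))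
      = (Set.Icc (a - r) (a + r)).indicator
          (fun x : ℝ => 2 * Real.sqrt (r^2 - (x-a)^2) / (c^2 + (x-a)^2)) := by
    funext x
    by_cases hx : x ∈ Set.Icc (a - r) (a + r)
    · rw [Set.indicator_of_mem hx]
    · rw [Set.indicator_of_notMem hx]
      simp only [Set.mem_Icc, not_and_or, not_le] at hx
      have : Real.sqrt (r^2 - (x-a)^2) = 0 := by
        apply Real.sqrt_eq_zero_of_nonpos
        rcases hx with hx | hx <;> nlinarith
      rw [this]; simp
  rw [houter, MeasureTheory.integral_indicator measurableSet_Icc,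
    MeasureTheory.integral_Icc_eq_integral_Ioc,
    ← intervalIntegral.integral_of_le (by linarith : a - r ≤ a + r)]
  have hshift := intervalIntegral.integral_comp_sub_right
    (a := a - r) (b := a + r) (fun u : ℝ => 2 * Real.sqrt (r^2 - u^2) / (c^2 + u^2)) a
  simp only [show a - r - a = -r by ring, show a + r - a = r by ring] at hshift
  rw [hshift, intJ r c hr hc0]
  have : c^2 + r^2 = h^2 := by rw [hcsq]; ring
  rw [this, Real.sqrt_sq h0.le]
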